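/- For a positive integer n, there exists a connected simple graph of order n whose three metric subgraphs (central, annular, and peripheral subgraphs) are each isomorphic to a cycle C_m for some m ≥ 3 if and only if n ≥ 15. -/

import Mathlib

/-- Eccentricity of a vertex in a (finite connected) simple graph:
the maximum distance from `v` to any vertex. -/
noncomputable def SimpleGraph.mecc {V : Type*} (G : SimpleGraph V) (v : V) : ℕ :=
  sSup (Set.range (G.dist v))

/-- Radius: the minimum eccentricity. -/
noncomputable def SimpleGraph.mrad {V : Type*} (G : SimpleGraph V) : ℕ :=
  sInf (Set.range G.mecc)

/-- Diameter: the maximum eccentricity. -/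
noncomputable def SimpleGraph.mdiam {V : Type*} (G : SimpleGraph V) : ℕ :=
  sSup (Set.range G.mecc)

/-- The center: the set of vertices of minimum eccentricity. -/
noncomputable def SimpleGraph.mcenter {V : Type*} (G : SimpleGraph V) : Set V :=
  {v | G.mecc v = G.mrad}

/-- The annulus: the set of vertices of intermediate eccentricity. -/
noncomputable def SimpleGraph.mannulus {V : Type*} (G : SimpleGraph V) : Set V :=
  {v | G.mrad < G.mecc v ∧ G.mecc v < G.mdiam}

/-- The periphery: the set of vertices of maximum eccentricity. -/
noncomputable def SimpleGraph.mperiphery {V : Type*} (G : SimpleGraph V) : Set V :=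
  {v | G.mecc v = G.mdiam}

/-- All three metric subgraphs are cycles. -/
noncomputable def metricSubgraphsAreCycles {V : Type*} (G : SimpleGraph V) : Prop :=
  (∃ m : ℕ, 3 ≤ m ∧ Nonempty (G.induce G.mcenter ≃g SimpleGraph.cycleGraph m)) ∧
  (∃ m : ℕ, 3 ≤ m ∧ Nonempty (G.induce G.mannulus ≃g SimpleGraph.cycleGraph m)) ∧
  (∃ m : ℕ, 3 ≤ m ∧ Nonempty (G.induce G.mperiphery ≃g SimpleGraph.cycleGraph m))

namespace MetricAux

open SimpleGraph

set_option linter.unusedSectionVars false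

variable {V : Type*} [Fintype V] {G : SimpleGraph V}

lemma dist_le_mecc (v u : V) : G.dist v u ≤ G.mecc v :=
  le_csSup (Set.finite_range _).bddAbove (Set.mem_range_self u)

lemma mecc_le [Nonempty V] {v : V} {k : ℕ} (h : ∀ u, G.dist v u ≤ k) : G.mecc v ≤ k :=
  csSup_le (Set.range_nonempty _) (by rintro x ⟨u, rfl⟩; exact h u)

lemma exists_dist_eq_mecc [Nonempty V] (v : V) : ∃ u, G.dist v u = G.mecc v := by
  have := Nat.sSup_mem (Set.range_nonempty (G.dist v)) (Set.finite_range _).bddAbove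
  exact this

lemma mrad_le_mecc (v : V) : G.mrad ≤ G.mecc v := Nat.sInf_le (Set.mem_range_self v)

lemma mecc_le_mdiam (v : V) : G.mecc v ≤ G.mdiam :=
  le_csSup (Set.finite_range _).bddAbove (Set.mem_range_self v)

lemma exists_mecc_eq_mrad [Nonempty V] : ∃ v, G.mecc v = G.mrad :=
  Nat.sInf_mem (Set.range_nonempty _)

lemma exists_mecc_eq_mdiam [Nonempty V] : ∃ v, G.mecc v = G.mdiam :=
  Nat.sSup_mem (Set.range_nonempty _) (Set.finite_range _).bddAbove

/-- Eccentricity is Lipschitz. -/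
lemma mecc_le_mecc_add_dist [Nonempty V] (hc : G.Connected) (u v : V) :
    G.mecc u ≤ G.mecc v + G.dist u v := by
  apply mecc_le
  intro x
  calc G.dist u x ≤ G.dist u v + G.dist v x := hc.dist_triangle
    _ ≤ G.dist u v + G.mecc v := by have := dist_le_mecc (G := G) v x; omega
    _ = G.mecc v + G.dist u v := by omega

end MetricAux

section Transfer

open SimpleGraph

variable {V W : Type*} {G : SimpleGraph V} {G' : SimpleGraph W}

lemma iso_dist_le (f : G ≃g G') (u v : V) : G'.dist (f u) (f v) ≤ G.dist u v := by
  by_cases h : G.Reachable u v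
  · obtain ⟨p, hp⟩ := h.exists_walk_length_eq_dist
    calc G'.dist (f u) (f v) ≤ (p.map f.toHom).length := SimpleGraph.dist_le _
      _ = G.dist u v := by rw [SimpleGraph.Walk.length_map, hp]
  · have h' : ¬ G'.Reachable (f u) (f v) := by
      intro hr
      apply h
      have := hr.map f.symm.toHom
      simpa using this
    rw [SimpleGraph.dist_eq_zero_of_not_reachable h,
      SimpleGraph.dist_eq_zero_of_not_reachable h']

lemma iso_dist (f : G ≃g G') (u v : V) : G'.dist (f u) (f v) = G.dist u v := by
  refine le_antisymm (iso_dist_le f u v) ?_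
  have := iso_dist_le f.symm (f u) (f v)
  simpa using this

lemma iso_mecc (f : G ≃g G') (v : V) : G'.mecc (f v) = G.mecc v := by
  unfold SimpleGraph.mecc
  congr 1
  ext k
  constructor
  · rintro ⟨w, rfl⟩
    exact ⟨f.symm w, by rw [← iso_dist f]; simp⟩
  · rintro ⟨u, rfl⟩
    exact ⟨f u, iso_dist f v u⟩

lemma iso_range_mecc (f : G ≃g G') : Set.range G'.mecc = Set.range G.mecc := by
  ext k
  constructor
  · rintro ⟨w, rfl⟩
    exact ⟨f.symm w, by rw [← iso_mecc f]; simp⟩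
  · rintro ⟨v, rfl⟩
    exact ⟨f v, iso_mecc f v⟩

lemma iso_mrad (f : G ≃g G') : G'.mrad = G.mrad := by
  unfold SimpleGraph.mrad; rw [iso_range_mecc f]

lemma iso_mdiam (f : G ≃g G') : G'.mdiam = G.mdiam := by
  unfold SimpleGraph.mdiam; rw [iso_range_mecc f]

/-- Iso of induced subgraphs on corresponding sets. -/
def isoInduce (f : G ≃g G') (s : Set V) (t : Set W) (h : ∀ v, v ∈ s ↔ f v ∈ t) :
    G.induce s ≃g G'.induce t where
  toEquiv := f.toEquiv.subtypeEquiv h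
  map_rel_iff' := by
    rintro ⟨a, ha⟩ ⟨b, hb⟩
    simpa using f.map_rel_iff

lemma iso_connected (f : G ≃g G') (h : G.Connected) : G'.Connected := by
  rw [SimpleGraph.connected_iff] at h ⊢
  obtain ⟨hp, ⟨v⟩⟩ := h
  refine ⟨fun a b => ?_, ⟨f v⟩⟩
  have := (hp (f.symm a) (f.symm b)).map f.toHom
  simpa using this

lemma iso_metricSubgraphs (f : G ≃g G') (h : metricSubgraphsAreCycles G) :
    metricSubgraphsAreCycles G' := by
  obtain ⟨⟨m1, h1, ⟨e1⟩⟩, ⟨m2, h2, ⟨e2⟩⟩, ⟨m3, h3, ⟨e3⟩⟩⟩ := h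
  have hc : ∀ v, v ∈ G.mcenter ↔ f v ∈ G'.mcenter := by
    intro v; simp only [SimpleGraph.mcenter, Set.mem_setOf_eq, iso_mecc f, iso_mrad f]
  have ha : ∀ v, v ∈ G.mannulus ↔ f v ∈ G'.mannulus := by
    intro v; simp only [SimpleGraph.mannulus, Set.mem_setOf_eq, iso_mecc f, iso_mrad f,
      iso_mdiam f]
  have hp : ∀ v, v ∈ G.mperiphery ↔ f v ∈ G'.mperiphery := by
    intro v; simp only [SimpleGraph.mperiphery, Set.mem_setOf_eq, iso_mecc f, iso_mdiam f]
  exact ⟨⟨m1, h1, ⟨((isoInduce f _ _ hc).symm.trans e1 : _)⟩⟩,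
    ⟨m2, h2, ⟨((isoInduce f _ _ ha).symm.trans e2 : _)⟩⟩,
    ⟨m3, h3, ⟨((isoInduce f _ _ hp).symm.trans e3 : _)⟩⟩⟩

end Transfer
section LowerBound

open Fin.NatCast Fin.CommRing

open SimpleGraph MetricAux

/-- In a cycle graph one can walk from `i` to `i + k` in `k` steps. -/
lemma cycle_walk_add (m : ℕ) (i : Fin (m+2)) (k : ℕ) :
    ∃ p : (cycleGraph (m+2)).Walk i (i + (k : Fin (m+2))), p.length = k := by
  induction k with
  | zero => exact ⟨(SimpleGraph.Walk.nil).copy rfl (by simp), by simp⟩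
  | succ k ih =>
      obtain ⟨p, hp⟩ := ih
      have hadj : (cycleGraph (m+2)).Adj (i + (k : Fin (m+2))) (i + ((k+1 : ℕ) : Fin (m+2))) := by
        rw [cycleGraph_adj]
        right
        push_cast
        ring
      exact ⟨p.concat hadj, by simp [hp]⟩

/-- In a cycle graph, any two vertices are joined by a walk of length at most half
the circumference. -/
lemma cycle_walk_le_half (m : ℕ) (i j : Fin (m+2)) :
    ∃ p : (cycleGraph (m+2)).Walk i j, p.length ≤ (m+2)/2 := by
  set k := (j - i).val with hk
  set k' := (i - j).val with hk'
  have hik : i + (k : Fin (m+2)) = j := by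
    rw [hk, Fin.cast_val_eq_self]; ring
  have hjk : j + (k' : Fin (m+2)) = i := by
    rw [hk', Fin.cast_val_eq_self]; ring
  by_cases hle : k ≤ (m+2)/2
  · obtain ⟨p, hp⟩ := cycle_walk_add m i k
    exact ⟨p.copy rfl hik, by simpa [hp] using hle⟩
  · obtain ⟨p, hp⟩ := cycle_walk_add m j k'
    refine ⟨(p.copy rfl hjk).reverse, ?_⟩
    have hsum : ((j - i) + (i - j)) = (0 : Fin (m+2)) := by ring
    have hsum' : (k + k') % (m+2) = 0 := by
      have := congrArg Fin.val hsum
      rwa [Fin.add_def] at this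
    have hklt : k < m+2 := (j - i).isLt
    have hk'lt : k' < m+2 := (i - j).isLt
    have hkk' : k + k' = m + 2 := by
      rcases Nat.lt_or_ge (k + k') (m+2) with hlt | hge
      · have := Nat.mod_eq_of_lt hlt
        omega
      · have h3 : k + k' - (m+2) < m + 2 := by omega
        have : (k + k') % (m+2) = (k + k') - (m+2) := by
          rw [Nat.mod_eq_sub_mod hge, Nat.mod_eq_of_lt h3]
        omega
    simp only [SimpleGraph.Walk.length_reverse, SimpleGraph.Walk.length_copy, hp]
    omega

variable {n : ℕ}

lemma set_nonempty_of_iso {G : SimpleGraph (Fin n)} {s : Set (Fin n)} {m : ℕ} (hm : 3 ≤ m)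
    (f : G.induce s ≃g cycleGraph m) : ∃ w, w ∈ s := by
  have hcard : Nat.card s = m := by
    have := Nat.card_congr f.toEquiv
    simpa using this
  have : Nonempty ↥s := (Nat.card_pos_iff.mp (by omega)).1
  obtain ⟨⟨w, hw⟩⟩ := this
  exact ⟨w, hw⟩

/-- A walk of length two has a midpoint. -/
lemma exists_midpoint {V : Type*} {G : SimpleGraph V} (hc : G.Connected) {x z : V}
    (h : G.dist x z = 2) : ∃ y, G.Adj x y ∧ G.Adj y z := by
  obtain ⟨p, hp⟩ := hc.exists_walk_length_eq_dist x z
  rw [h] at hp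
  cases p with
  | nil => simp at hp
  | cons hadj q =>
    cases q with
    | nil => simp at hp
    | cons hadj' q' =>
      have : q'.length = 0 := by simpa using hp
      have heq := SimpleGraph.Walk.eq_of_length_eq_zero this
      subst heq
      exact ⟨_, hadj, hadj'⟩

theorem lower_bound (G : SimpleGraph (Fin n)) (hc : G.Connected)
    (h : metricSubgraphsAreCycles G) : 15 ≤ n := by
  haveI : Nonempty (Fin n) := hc.nonempty
  obtain ⟨⟨a, ha3, ⟨fC⟩⟩, ⟨b, hb3, ⟨fA⟩⟩, ⟨c, hc3, ⟨fP⟩⟩⟩ := h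
  -- cardinalities
  have hcardC : Nat.card G.mcenter = a := by simpa using Nat.card_congr fC.toEquiv
  have hcardA : Nat.card G.mannulus = b := by simpa using Nat.card_congr fA.toEquiv
  have hcardP : Nat.card G.mperiphery = c := by simpa using Nat.card_congr fP.toEquiv
  -- an annulus vertex
  obtain ⟨w, hw⟩ := set_nonempty_of_iso hb3 fA
  obtain ⟨hw1, hw2⟩ := hw
  -- a center vertex
  obtain ⟨v0, hv0⟩ := set_nonempty_of_iso ha3 fC
  -- diametral pair, both in periphery
  obtain ⟨v, hv⟩ := exists_mecc_eq_mdiam (G := G)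
  obtain ⟨u, hu⟩ := exists_dist_eq_mecc (G := G) v
  rw [hv] at hu
  have huP : G.mecc u = G.mdiam := by
    refine le_antisymm (mecc_le_mdiam u) ?_
    calc G.mdiam = G.dist v u := hu.symm
      _ = G.dist u v := SimpleGraph.dist_comm
      _ ≤ G.mecc u := dist_le_mecc u v
  -- diameter at most twice radius
  have hd2r : G.mdiam ≤ 2 * G.mrad := by
    have h1 : G.dist v v0 ≤ G.mrad := by
      rw [SimpleGraph.dist_comm]; rw [← hv0]; exact dist_le_mecc v0 v
    have h2 : G.dist v0 u ≤ G.mrad := by rw [← hv0]; exact dist_le_mecc v0 u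
    have := hc.dist_triangle (u := v) (v := v0) (w := u)
    omega
  -- diameter at least radius + 2
  have hdr2 : G.mrad + 2 ≤ G.mdiam := by omega
  -- 2 * diam ≤ c
  have h2dc : 2 * G.mdiam ≤ c := by
    obtain ⟨c', rfl⟩ : ∃ c', c = c' + 2 := ⟨c - 2, by omega⟩
    obtain ⟨p, hp⟩ := cycle_walk_le_half c' (fP ⟨v, hv⟩) (fP ⟨u, huP⟩)
    have e1 : fP.symm (fP ⟨v, hv⟩) = ⟨v, hv⟩ := by simp
    have e2 : fP.symm (fP ⟨u, huP⟩) = ⟨u, huP⟩ := by simp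
    have hq2 : G.dist v u ≤ (c' + 2)/2 := by
      refine le_trans (SimpleGraph.dist_le (((p.map fP.symm.toHom).copy e1 e2).map
        (SimpleGraph.Embedding.induce G.mperiphery).toHom)) ?_
      rw [SimpleGraph.Walk.length_map, SimpleGraph.Walk.length_copy, SimpleGraph.Walk.length_map]
      exact hp
    rw [hu] at hq2
    omega
  -- case analysis
  have hn : n = a + b + c := by
    have hcover : ∀ x : Fin n, x ∈ G.mcenter ∨ x ∈ G.mannulus ∨ x ∈ G.mperiphery := by
      intro x
      have h1 := mrad_le_mecc (G := G) x
      have h2 := mecc_le_mdiam (G := G) x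
      simp only [SimpleGraph.mcenter, SimpleGraph.mannulus, SimpleGraph.mperiphery,
        Set.mem_setOf_eq]
      omega
    have hd1 : Disjoint G.mcenter G.mannulus := by
      rw [Set.disjoint_left]
      intro x h1 h2
      simp only [SimpleGraph.mcenter, SimpleGraph.mannulus, Set.mem_setOf_eq] at h1 h2
      omega
    have hd2 : Disjoint (G.mcenter ∪ G.mannulus) G.mperiphery := by
      rw [Set.disjoint_left]
      intro x h1 h2
      simp only [SimpleGraph.mcenter, SimpleGraph.mannulus, SimpleGraph.mperiphery,
        Set.mem_union, Set.mem_setOf_eq] at h1 h2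
      omega
    have huniv : G.mcenter ∪ G.mannulus ∪ G.mperiphery = Set.univ := by
      ext x
      simp only [Set.mem_union, Set.mem_univ, iff_true]
      rcases hcover x with h | h | h <;> tauto
    have hcalc : (G.mcenter ∪ G.mannulus ∪ G.mperiphery).ncard
        = G.mcenter.ncard + G.mannulus.ncard + G.mperiphery.ncard := by
      rw [Set.ncard_union_eq hd2 (Set.toFinite _) (Set.toFinite _),
        Set.ncard_union_eq hd1 (Set.toFinite _) (Set.toFinite _)]
    rw [huniv] at hcalc
    rw [Set.ncard_univ] at hcalc
    simp only [Nat.card_coe_set_eq] at hcardC hcardA hcardP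
    simp only [Nat.card_eq_fintype_card, Fintype.card_fin] at hcalc
    omega
  by_cases hd5 : 5 ≤ G.mdiam
  · omega
  · -- mdiam = 4, mrad = 2
    have hd4 : G.mdiam = 4 := by omega
    have hr2 : G.mrad = 2 := by omega
    by_cases hb4 : 4 ≤ b
    · omega
    · -- b = 3 : contradiction
      exfalso
      have hb : b = 3 := by omega
      subst hb
      -- annulus vertices are pairwise adjacent
      have hAadj : ∀ x y, x ∈ G.mannulus → y ∈ G.mannulus → x ≠ y → G.Adj x y := by
        intro x y hx hy hxy
        have hne : fA ⟨x, hx⟩ ≠ fA ⟨y, hy⟩ := by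
          intro hcon
          apply hxy
          have := fA.toEquiv.injective hcon
          exact Subtype.ext_iff.mp this
        have hdec : ∀ i j : Fin 3, i ≠ j → (cycleGraph 3).Adj i j := by decide
        have : (cycleGraph 3).Adj (fA ⟨x, hx⟩) (fA ⟨y, hy⟩) := hdec _ _ hne
        have := fA.map_rel_iff.mp this
        simpa using this
      -- midpoints
      have key : ∀ z, G.mecc z = 4 → ∃ y, G.Adj v0 y ∧ G.Adj y z ∧ y ∈ G.mannulus := by
        intro z hz
        have hdist : G.dist v0 z = 2 := by
          have hle : G.dist v0 z ≤ 2 := by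
            rw [← hr2, ← hv0]; exact dist_le_mecc v0 z
          have hge := mecc_le_mecc_add_dist hc z v0
          rw [hz, hv0, hr2, SimpleGraph.dist_comm] at hge
          omega
        obtain ⟨y, hy1, hy2⟩ := exists_midpoint hc hdist
        refine ⟨y, hy1, hy2, ?_⟩
        have hyu : G.mecc y ≤ 3 := by
          have := mecc_le_mecc_add_dist hc y v0
          have hd1 : G.dist y v0 = 1 := by
            rw [SimpleGraph.dist_comm]
            exact SimpleGraph.dist_eq_one_iff_adj.mpr hy1
          rw [hv0, hr2, hd1] at this
          omega
        have hyl : 3 ≤ G.mecc y := by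
          have := mecc_le_mecc_add_dist hc z y
          have hd1 : G.dist z y = 1 := by
            rw [SimpleGraph.dist_comm]
            exact SimpleGraph.dist_eq_one_iff_adj.mpr hy2
          rw [hz, hd1] at this
          omega
        constructor
        · rw [hr2]; omega
        · rw [hd4]; omega
      obtain ⟨y, hy1, hy2, hyA⟩ := key v (by rw [hv, hd4])
      obtain ⟨y', hy'1, hy'2, hy'A⟩ := key u (by rw [huP, hd4])
      have hyy' : G.dist y y' ≤ 1 := by
        by_cases heq : y = y'
        · rw [heq, SimpleGraph.dist_self]; omega
        · exact le_of_eq (SimpleGraph.dist_eq_one_iff_adj.mpr (hAadj y y' hyA hy'A heq))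
      have ht1 := hc.dist_triangle (u := v) (v := y) (w := u)
      have ht2 := hc.dist_triangle (u := y) (v := y') (w := u)
      have hvy : G.dist v y = 1 := by
        rw [SimpleGraph.dist_comm]
        exact SimpleGraph.dist_eq_one_iff_adj.mpr hy2
      have hy'u : G.dist y' u = 1 := SimpleGraph.dist_eq_one_iff_adj.mpr hy'2
      rw [hd4] at hu
      omega

end LowerBound
section Construction

open SimpleGraph MetricAux

/-- Vertex type of the model graph: center `Fin 3`, annulus `Fin b`, periphery `Fin 8`. -/
abbrev MV (b : ℕ) := Fin 3 ⊕ Fin b ⊕ Fin 8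

/-- Attachment map from the periphery 8-cycle into the annulus cycle. -/
def attN : ℕ → ℕ := fun k => match k with
  | 0 => 0 | 1 => 0 | 2 => 0 | 3 => 1 | 4 => 2 | 5 => 2 | 6 => 2 | _ => 3

/-- Attachment map, `Fin` version. -/
def att (k : Fin 8) : ℕ := attN k.val

/-- Base (asymmetric) edge relation of the model graph. -/
def mgR (b : ℕ) : MV b → MV b → Prop
  | Sum.inl i, Sum.inl j => i ≠ j
  | Sum.inl _, Sum.inr (Sum.inl _) => True
  | Sum.inr (Sum.inl i), Sum.inr (Sum.inl j) => (cycleGraph b).Adj i j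
  | Sum.inr (Sum.inl i), Sum.inr (Sum.inr k) => i.val = att k
  | Sum.inr (Sum.inr k), Sum.inr (Sum.inr l) => (cycleGraph 8).Adj k l
  | _, _ => False

/-- The model graph. -/
def mg (b : ℕ) : SimpleGraph (MV b) where
  Adj u v := mgR b u v ∨ mgR b v u
  symm := ⟨fun _ _ h => h.symm⟩
  loopless := by
    constructor
    rintro (i | j | k) h <;> rcases h with h | h <;> simp [mgR] at h

variable {b : ℕ}

lemma mg_adj_cc {i j : Fin 3} : (mg b).Adj (.inl i) (.inl j) ↔ i ≠ j := by
  show i ≠ j ∨ j ≠ i ↔ i ≠ j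
  constructor
  · rintro (h | h)
    · exact h
    · exact h.symm
  · exact Or.inl

lemma mg_adj_cw (i : Fin 3) (j : Fin b) : (mg b).Adj (.inl i) (.inr (.inl j)) :=
  Or.inl trivial

lemma mg_adj_cp (i : Fin 3) (k : Fin 8) : ¬ (mg b).Adj (.inl i) (.inr (.inr k)) := by
  rintro (h | h) <;> simp [mgR] at h

lemma mg_adj_ww {i j : Fin b} :
    (mg b).Adj (.inr (.inl i)) (.inr (.inl j)) ↔ (cycleGraph b).Adj i j := by
  constructor
  · rintro (h | h)
    · exact h
    · exact h.symm
  · exact Or.inl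

lemma mg_adj_wp {i : Fin b} {k : Fin 8} :
    (mg b).Adj (.inr (.inl i)) (.inr (.inr k)) ↔ i.val = att k := by
  constructor
  · rintro (h | h)
    · exact h
    · simp [mgR] at h
  · exact Or.inl

lemma mg_adj_pp {k l : Fin 8} :
    (mg b).Adj (.inr (.inr k)) (.inr (.inr l)) ↔ (cycleGraph 8).Adj k l := by
  constructor
  · rintro (h | h)
    · exact h
    · exact h.symm
  · exact Or.inl

lemma att_lt (hb : 4 ≤ b) (k : Fin 8) : att k < b := by
  have : att k ≤ 3 := by fin_cases k <;> decide
  omega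

/-- Attachment as a `Fin b` vertex. -/
def attF (hb : 4 ≤ b) (k : Fin 8) : Fin b := ⟨att k, att_lt hb k⟩

lemma mg_adj_wp' (hb : 4 ≤ b) (k : Fin 8) :
    (mg b).Adj (.inr (.inl (attF hb k))) (.inr (.inr k)) := Or.inl rfl

/-- Upper bounds on distances: from a center vertex. -/
lemma mg_dist_c (hb : 4 ≤ b) (i : Fin 3) (x : MV b) : (mg b).dist (.inl i) x ≤ 2 := by
  rcases x with j | j | k
  · by_cases h : i = j
    · subst h; rw [SimpleGraph.dist_self]; omega
    · calc (mg b).dist (.inl i) (.inl j)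
          ≤ (SimpleGraph.Walk.cons (mg_adj_cc.mpr h) SimpleGraph.Walk.nil).length :=
            SimpleGraph.dist_le _
        _ ≤ 2 := by simp
  · calc (mg b).dist (.inl i) (.inr (.inl j))
        ≤ (SimpleGraph.Walk.cons (mg_adj_cw i j) SimpleGraph.Walk.nil).length :=
          SimpleGraph.dist_le _
      _ ≤ 2 := by simp
  · calc (mg b).dist (.inl i) (.inr (.inr k))
        ≤ (SimpleGraph.Walk.cons (mg_adj_cw i (attF hb k))
            (SimpleGraph.Walk.cons (mg_adj_wp' hb k) SimpleGraph.Walk.nil)).length :=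
          SimpleGraph.dist_le _
      _ ≤ 2 := by simp

/-- Upper bounds on distances: from an annulus vertex. -/
lemma mg_dist_w (hb : 4 ≤ b) (i : Fin b) (x : MV b) :
    (mg b).dist (.inr (.inl i)) x ≤ 3 := by
  have hwc : (mg b).Adj (.inr (.inl i)) (.inl 0) := (SimpleGraph.Adj.symm (mg_adj_cw 0 i))
  rcases x with j | j | k
  · calc (mg b).dist (.inr (.inl i)) (.inl j)
        ≤ (SimpleGraph.Walk.cons (SimpleGraph.Adj.symm (mg_adj_cw j i)) SimpleGraph.Walk.nil).length :=
          SimpleGraph.dist_le _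
      _ ≤ 3 := by simp
  · calc (mg b).dist (.inr (.inl i)) (.inr (.inl j))
        ≤ (SimpleGraph.Walk.cons hwc
            (SimpleGraph.Walk.cons (mg_adj_cw 0 j) SimpleGraph.Walk.nil)).length :=
          SimpleGraph.dist_le _
      _ ≤ 3 := by simp
  · calc (mg b).dist (.inr (.inl i)) (.inr (.inr k))
        ≤ (SimpleGraph.Walk.cons hwc
            (SimpleGraph.Walk.cons (mg_adj_cw 0 (attF hb k))
              (SimpleGraph.Walk.cons (mg_adj_wp' hb k) SimpleGraph.Walk.nil))).length :=
          SimpleGraph.dist_le _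
      _ ≤ 3 := by simp

/-- Upper bounds on distances: from a periphery vertex. -/
lemma mg_dist_p (hb : 4 ≤ b) (k : Fin 8) (x : MV b) :
    (mg b).dist (.inr (.inr k)) x ≤ 4 := by
  have hpw : (mg b).Adj (.inr (.inr k)) (.inr (.inl (attF hb k))) :=
    (SimpleGraph.Adj.symm (mg_adj_wp' hb k))
  have hwc : (mg b).Adj (.inr (.inl (attF hb k))) (.inl 0) := (SimpleGraph.Adj.symm (mg_adj_cw 0 _))
  rcases x with j | j | l
  · calc (mg b).dist (.inr (.inr k)) (.inl j)
        ≤ (SimpleGraph.Walk.cons hpw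
            (SimpleGraph.Walk.cons (SimpleGraph.Adj.symm (mg_adj_cw j _)) SimpleGraph.Walk.nil)).length :=
          SimpleGraph.dist_le _
      _ ≤ 4 := by simp
  · calc (mg b).dist (.inr (.inr k)) (.inr (.inl j))
        ≤ (SimpleGraph.Walk.cons hpw
            (SimpleGraph.Walk.cons hwc
              (SimpleGraph.Walk.cons (mg_adj_cw 0 j) SimpleGraph.Walk.nil))).length :=
          SimpleGraph.dist_le _
      _ ≤ 4 := by simp
  · calc (mg b).dist (.inr (.inr k)) (.inr (.inr l))
        ≤ (SimpleGraph.Walk.cons hpw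
            (SimpleGraph.Walk.cons hwc
              (SimpleGraph.Walk.cons (mg_adj_cw 0 (attF hb l))
                (SimpleGraph.Walk.cons (mg_adj_wp' hb l) SimpleGraph.Walk.nil)))).length :=
          SimpleGraph.dist_le _
      _ ≤ 4 := by simp

lemma mg_connected (hb : 4 ≤ b) : (mg b).Connected := by
  rw [SimpleGraph.connected_iff]
  have hreach : ∀ x : MV b, (mg b).Reachable (.inl 0) x := by
    rintro (j | j | k)
    · by_cases h : (0 : Fin 3) = j
      · subst h; exact SimpleGraph.Reachable.refl _
      · exact SimpleGraph.Adj.reachable (mg_adj_cc.mpr h)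
    · exact SimpleGraph.Adj.reachable (mg_adj_cw 0 j)
    · exact ⟨SimpleGraph.Walk.cons (mg_adj_cw 0 (attF hb k))
        (SimpleGraph.Walk.cons (mg_adj_wp' hb k) SimpleGraph.Walk.nil)⟩
  exact ⟨fun u v => (hreach u).symm.trans (hreach v), ⟨.inl 0⟩⟩

end Construction
section Potentials

open SimpleGraph MetricAux

/-- Cyclic distance on the periphery 8-cycle, used as potential values. -/
def pPot (t k : ℕ) : ℕ :=
  if (8 + t - k) % 8 ≤ (8 + k - t) % 8 then (8 + t - k) % 8 else (8 + k - t) % 8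

/-- Potential values on the annulus cycle. -/
def wPot (t i b : ℕ) : ℕ :=
  match t with
  | 0 => if i = 0 then 1 else if i = 1 ∨ i = 3 ∨ i = b - 1 then 2 else 3
  | 1 => if i = 0 then 1 else if i = 1 ∨ i = b - 1 then 2 else 3
  | 2 => if i = 0 then 1 else if i = 1 ∨ i = b - 1 then 2 else 3
  | 3 => if i = 1 then 1 else if i = 0 ∨ i = 2 then 2 else 3
  | 4 => if i = 2 then 1 else if i = 0 then 3 else if i = 1 ∨ i = 3 then 2 else 3
  | 5 => if i = 2 then 1 else if i = 0 then 3 else if i = 1 ∨ i = 3 then 2 else 3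
  | 6 => if i = 2 then 1 else if i = 0 then 3 else if i = 1 ∨ i = 3 then 2 else 3
  | 7 => if i = 3 then 1 else if i = 1 then 3 else if i = 0 ∨ i = 2 ∨ i = 4 then 2 else 3
  | _ => 0

/-- The potential function on the model graph. -/
def phi (t : ℕ) {b : ℕ} : MV b → ℕ
  | .inl _ => 2
  | .inr (.inl i) => wPot t i.val b
  | .inr (.inr k) => pPot t k.val

lemma wPot_bounds (t i b : ℕ) (ht : t < 8) : 1 ≤ wPot t i b ∧ wPot t i b ≤ 3 := by
  interval_cases t <;> simp only [wPot] <;> split_ifs <;> omega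

/-- Helper: `x % b = 1` for `x < 2b`. -/
lemma mod_eq_one_cases {x b : ℕ} (hb : 2 ≤ b) (hx : x < 2 * b) (h : x % b = 1) :
    x = 1 ∨ x = b + 1 := by
  rcases Nat.lt_or_ge x b with h1 | h1
  · rw [Nat.mod_eq_of_lt h1] at h; omega
  · rw [Nat.mod_eq_sub_mod h1, Nat.mod_eq_of_lt (by omega)] at h; omega

/-- Numeric description of adjacency in a cycle graph. -/
lemma cyc_adj_nat {b : ℕ} (hb : 2 ≤ b) {i j : Fin b} (h : (cycleGraph b).Adj i j) :
    i.val + 1 = j.val ∨ j.val + 1 = i.val ∨ (i.val = 0 ∧ j.val = b - 1) ∨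
      (j.val = 0 ∧ i.val = b - 1) := by
  rw [cycleGraph_adj'] at h
  have hi := i.isLt
  have hj := j.isLt
  rcases h with h | h
  · rw [Fin.sub_def] at h
    simp only at h
    have := mod_eq_one_cases hb (x := b - j.val + i.val) (by omega) h
    omega
  · rw [Fin.sub_def] at h
    simp only at h
    have := mod_eq_one_cases hb (x := b - i.val + j.val) (by omega) h
    omega

/-- The annulus part of the potential is Lipschitz along the annulus cycle. -/
lemma wPot_lip {t b : ℕ} (ht : t < 8) (hb : 4 ≤ b) {i j : ℕ}
    (hij : i + 1 = j ∨ j + 1 = i ∨ (i = 0 ∧ j = b - 1) ∨ (j = 0 ∧ i = b - 1))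
    (hi : i < b) (hj : j < b) : wPot t j b ≤ wPot t i b + 1 := by
  interval_cases t <;> simp only [wPot] <;> split_ifs <;> omega

/-- The periphery part of the potential is Lipschitz along the periphery cycle. -/
lemma pPot_lip_pp : ∀ t : Fin 8, ∀ k l : Fin 8, (cycleGraph 8).Adj k l →
    pPot t.val l.val ≤ pPot t.val k.val + 1 := by decide

/-- The potential is Lipschitz across attachment edges. -/
lemma pot_lip_wpN {b : ℕ} (hb : 4 ≤ b) (t kv : ℕ) (ht : t < 8) (hk : kv < 8) :
    pPot t kv ≤ wPot t (attN kv) b + 1 ∧ wPot t (attN kv) b ≤ pPot t kv + 1 := by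
  interval_cases kv <;> interval_cases t <;>
    (norm_num [attN, pPot, wPot]; (try split_ifs <;> omega))

lemma pot_lip_wp {b : ℕ} (hb : 4 ≤ b) (t : ℕ) (ht : t < 8) (k : Fin 8) :
    pPot t k.val ≤ wPot t (att k) b + 1 ∧ wPot t (att k) b ≤ pPot t k.val + 1 :=
  pot_lip_wpN hb t k.val ht k.isLt

/-- The potential `phi t` is Lipschitz along edges of the model graph. -/
lemma phi_lip {b : ℕ} (hb : 4 ≤ b) (t : Fin 8) {u v : MV b} (h : (mg b).Adj u v) :
    phi t.val v ≤ phi t.val u + 1 := by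
  have ht := t.isLt
  rcases u with i | i | k <;> rcases v with j | j | l
  · simp [phi]
  · simp only [phi]
    have := wPot_bounds t.val j.val b ht
    omega
  · exact absurd h (mg_adj_cp i l)
  · simp only [phi]
    have := wPot_bounds t.val i.val b ht
    omega
  · rw [mg_adj_ww] at h
    have hnat := cyc_adj_nat (by omega) h
    exact wPot_lip ht hb hnat i.isLt j.isLt
  · rw [mg_adj_wp] at h
    simp only [phi, h]
    exact (pot_lip_wp hb t.val ht l).1
  · exact absurd (SimpleGraph.Adj.symm h) (mg_adj_cp j k)
  · rw [show (mg b).Adj (.inr (.inr k)) (.inr (.inl j)) ↔ j.val = att k from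
      ⟨fun hh => mg_adj_wp.mp (SimpleGraph.Adj.symm hh), fun hh => SimpleGraph.Adj.symm (mg_adj_wp.mpr hh)⟩] at h
    simp only [phi, h]
    exact (pot_lip_wp hb t.val ht k).2
  · rw [mg_adj_pp] at h
    exact pPot_lip_pp t k l h

/-- Potentials bound walks from below. -/
lemma pot_le_walk {V : Type*} {G : SimpleGraph V} {φ : V → ℕ}
    (hφ : ∀ u v, G.Adj u v → φ v ≤ φ u + 1) {x y : V} (p : G.Walk x y) :
    φ y ≤ φ x + p.length := by
  induction p with
  | nil => omega
  | cons h q ih =>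
      have := hφ _ _ h
      simp only [SimpleGraph.Walk.length_cons]
      omega

lemma pot_le_dist {V : Type*} {G : SimpleGraph V} (hc : G.Connected) {φ : V → ℕ}
    (hφ : ∀ u v, G.Adj u v → φ v ≤ φ u + 1) (x y : V) :
    φ y ≤ φ x + G.dist x y := by
  obtain ⟨p, hp⟩ := hc.exists_walk_length_eq_dist x y
  have := pot_le_walk hφ p
  omega

end Potentials
section ModelMetrics

open SimpleGraph MetricAux

variable {b : ℕ}

lemma pPot_self (t : ℕ) : pPot t t = 0 := by simp [pPot]

lemma mg_mecc_c (hb : 4 ≤ b) (i : Fin 3) : (mg b).mecc (.inl i) = 2 := by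
  refine le_antisymm (mecc_le (mg_dist_c hb i)) ?_
  have hne : (Sum.inl i : MV b) ≠ .inr (.inr 0) := by simp
  have hadj : ¬ (mg b).Adj (.inl i) (.inr (.inr 0)) := mg_adj_cp i 0
  have hpos : 0 < (mg b).dist (.inl i) (.inr (.inr 0)) :=
    (mg_connected hb).pos_dist_of_ne hne
  have hone : (mg b).dist (.inl i) (.inr (.inr 0)) ≠ 1 := fun hh =>
    hadj (SimpleGraph.dist_eq_one_iff_adj.mp hh)
  have := dist_le_mecc (G := mg b) (.inl i) (.inr (.inr 0))
  omega

lemma mg_mecc_w (hb : 4 ≤ b) (i : Fin b) : (mg b).mecc (.inr (.inl i)) = 3 := by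
  refine le_antisymm (mecc_le (mg_dist_w hb i)) ?_
  obtain ⟨t, ht8, ht3⟩ : ∃ t : ℕ, t < 8 ∧ wPot t i.val b = 3 := by
    have hlt := i.isLt
    by_cases h0 : i.val = 0
    · exact ⟨4, by omega, by simp only [wPot]; split_ifs <;> omega⟩
    · by_cases h1 : i.val = 1
      · exact ⟨7, by omega, by simp only [wPot]; split_ifs <;> omega⟩
      · by_cases h2 : i.val = 2
        · exact ⟨0, by omega, by simp only [wPot]; split_ifs <;> omega⟩
        · by_cases hbl : i.val = b - 1
          · exact ⟨3, by omega, by simp only [wPot]; split_ifs <;> omega⟩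
          · by_cases h3 : i.val = 3
            · exact ⟨1, by omega, by simp only [wPot]; split_ifs <;> omega⟩
            · exact ⟨0, by omega, by simp only [wPot]; split_ifs <;> omega⟩
  have hlip : ∀ u v : MV b, (mg b).Adj u v → phi t v ≤ phi t u + 1 := by
    intro u v h
    exact phi_lip hb ⟨t, ht8⟩ h
  have hkey := pot_le_dist (mg_connected hb) hlip (.inr (.inr ⟨t, ht8⟩)) (.inr (.inl i))
  simp only [phi, pPot_self] at hkey
  rw [ht3] at hkey
  have hd := dist_le_mecc (G := mg b) (.inr (.inl i)) (.inr (.inr ⟨t, ht8⟩))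
  rw [SimpleGraph.dist_comm] at hd
  omega

lemma pPot_add_four : ∀ k : Fin 8, pPot k.val ((k + 4 : Fin 8)).val = 4 := by decide

lemma mg_mecc_p (hb : 4 ≤ b) (k : Fin 8) : (mg b).mecc (.inr (.inr k)) = 4 := by
  refine le_antisymm (mecc_le (mg_dist_p hb k)) ?_
  have hlip : ∀ u v : MV b, (mg b).Adj u v → phi k.val v ≤ phi k.val u + 1 := by
    intro u v h
    exact phi_lip hb ⟨k.val, k.isLt⟩ h
  have hkey := pot_le_dist (mg_connected hb) hlip (.inr (.inr k)) (.inr (.inr (k + 4)))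
  simp only [phi, pPot_self] at hkey
  rw [pPot_add_four k] at hkey
  have hd := dist_le_mecc (G := mg b) (.inr (.inr k)) (.inr (.inr (k + 4)))
  omega

lemma mg_mrad (hb : 4 ≤ b) : (mg b).mrad = 2 := by
  refine le_antisymm (Nat.sInf_le ⟨.inl 0, mg_mecc_c hb 0⟩) ?_
  refine le_csInf ⟨2, ⟨.inl 0, mg_mecc_c hb 0⟩⟩ ?_
  rintro x ⟨v, rfl⟩
  rcases v with i | i | k
  · rw [mg_mecc_c hb]
  · rw [mg_mecc_w hb]; omega
  · rw [mg_mecc_p hb]; omega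

lemma mg_mdiam (hb : 4 ≤ b) : (mg b).mdiam = 4 := by
  refine le_antisymm ?_ (le_csSup (Set.finite_range _).bddAbove ⟨.inr (.inr 0), mg_mecc_p hb 0⟩)
  refine csSup_le ⟨2, ⟨.inl 0, mg_mecc_c hb 0⟩⟩ ?_
  rintro x ⟨v, rfl⟩
  rcases v with i | i | k
  · rw [mg_mecc_c hb]; omega
  · rw [mg_mecc_w hb]; omega
  · rw [mg_mecc_p hb]

lemma cyc3_adj : ∀ i j : Fin 3, (cycleGraph 3).Adj i j ↔ i ≠ j := by decide

lemma mg_mem_center (hb : 4 ≤ b) (v : MV b) :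
    v ∈ (mg b).mcenter ↔ ∃ i : Fin 3, v = .inl i := by
  rcases v with i | i | k
  · simp only [SimpleGraph.mcenter, Set.mem_setOf_eq, mg_mecc_c hb, mg_mrad hb]
    exact ⟨fun _ => ⟨i, rfl⟩, fun _ => trivial⟩
  · simp only [SimpleGraph.mcenter, Set.mem_setOf_eq, mg_mecc_w hb, mg_mrad hb]
    constructor
    · omega
    · rintro ⟨j, h⟩; simp at h
  · simp only [SimpleGraph.mcenter, Set.mem_setOf_eq, mg_mecc_p hb, mg_mrad hb]
    constructor
    · omega
    · rintro ⟨j, h⟩; simp at h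

lemma mg_mem_annulus (hb : 4 ≤ b) (v : MV b) :
    v ∈ (mg b).mannulus ↔ ∃ i : Fin b, v = .inr (.inl i) := by
  rcases v with i | i | k
  · simp only [SimpleGraph.mannulus, Set.mem_setOf_eq, mg_mecc_c hb, mg_mrad hb, mg_mdiam hb]
    constructor
    · omega
    · rintro ⟨j, h⟩; simp at h
  · simp only [SimpleGraph.mannulus, Set.mem_setOf_eq, mg_mecc_w hb, mg_mrad hb, mg_mdiam hb]
    exact ⟨fun _ => ⟨i, rfl⟩, fun _ => by omega⟩
  · simp only [SimpleGraph.mannulus, Set.mem_setOf_eq, mg_mecc_p hb, mg_mrad hb, mg_mdiam hb]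
    constructor
    · omega
    · rintro ⟨j, h⟩; simp at h

lemma mg_mem_periphery (hb : 4 ≤ b) (v : MV b) :
    v ∈ (mg b).mperiphery ↔ ∃ k : Fin 8, v = .inr (.inr k) := by
  rcases v with i | i | k
  · simp only [SimpleGraph.mperiphery, Set.mem_setOf_eq, mg_mecc_c hb, mg_mdiam hb]
    constructor
    · omega
    · rintro ⟨j, h⟩; simp at h
  · simp only [SimpleGraph.mperiphery, Set.mem_setOf_eq, mg_mecc_w hb, mg_mdiam hb]
    constructor
    · omega
    · rintro ⟨j, h⟩; simp at h
  · simp only [SimpleGraph.mperiphery, Set.mem_setOf_eq, mg_mecc_p hb, mg_mdiam hb]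
    exact ⟨fun _ => ⟨k, rfl⟩, fun _ => trivial⟩

/-- The central subgraph of the model graph is a triangle. -/
noncomputable def mgIsoC (hb : 4 ≤ b) : (mg b).induce (mg b).mcenter ≃g cycleGraph 3 where
  toFun x := match x.val with
    | .inl i => i
    | _ => 0
  invFun i := ⟨.inl i, (mg_mem_center hb _).mpr ⟨i, rfl⟩⟩
  left_inv := by
    rintro ⟨v, hv⟩
    obtain ⟨i, rfl⟩ := (mg_mem_center hb v).mp hv
    rfl
  right_inv := fun i => rfl
  map_rel_iff' := by
    rintro ⟨v, hv⟩ ⟨w, hw⟩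
    obtain ⟨i, rfl⟩ := (mg_mem_center hb v).mp hv
    obtain ⟨j, rfl⟩ := (mg_mem_center hb w).mp hw
    simp only [Equiv.coe_fn_mk, comap_adj, Function.Embedding.coe_subtype]
    rw [cyc3_adj, mg_adj_cc]

/-- The annular subgraph of the model graph is a `b`-cycle. -/
noncomputable def mgIsoA (hb : 4 ≤ b) : (mg b).induce (mg b).mannulus ≃g cycleGraph b where
  toFun x := match x.val with
    | .inr (.inl i) => i
    | _ => ⟨0, by omega⟩
  invFun i := ⟨.inr (.inl i), (mg_mem_annulus hb _).mpr ⟨i, rfl⟩⟩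
  left_inv := by
    rintro ⟨v, hv⟩
    obtain ⟨i, rfl⟩ := (mg_mem_annulus hb v).mp hv
    rfl
  right_inv := fun i => rfl
  map_rel_iff' := by
    rintro ⟨v, hv⟩ ⟨w, hw⟩
    obtain ⟨i, rfl⟩ := (mg_mem_annulus hb v).mp hv
    obtain ⟨j, rfl⟩ := (mg_mem_annulus hb w).mp hw
    simp only [Equiv.coe_fn_mk, comap_adj, Function.Embedding.coe_subtype]
    rw [mg_adj_ww]

/-- The peripheral subgraph of the model graph is an 8-cycle. -/
noncomputable def mgIsoP (hb : 4 ≤ b) : (mg b).induce (mg b).mperiphery ≃g cycleGraph 8 where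
  toFun x := match x.val with
    | .inr (.inr k) => k
    | _ => 0
  invFun k := ⟨.inr (.inr k), (mg_mem_periphery hb _).mpr ⟨k, rfl⟩⟩
  left_inv := by
    rintro ⟨v, hv⟩
    obtain ⟨k, rfl⟩ := (mg_mem_periphery hb v).mp hv
    rfl
  right_inv := fun k => rfl
  map_rel_iff' := by
    rintro ⟨v, hv⟩ ⟨w, hw⟩
    obtain ⟨k, rfl⟩ := (mg_mem_periphery hb v).mp hv
    obtain ⟨l, rfl⟩ := (mg_mem_periphery hb w).mp hw
    simp only [Equiv.coe_fn_mk, comap_adj, Function.Embedding.coe_subtype]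
    rw [mg_adj_pp]

theorem mg_msc (hb : 4 ≤ b) : metricSubgraphsAreCycles (mg b) :=
  ⟨⟨3, le_rfl, ⟨mgIsoC hb⟩⟩, ⟨b, by omega, ⟨mgIsoA hb⟩⟩, ⟨8, by omega, ⟨mgIsoP hb⟩⟩⟩

end ModelMetrics

theorem exists_graph_with_cycle_metric_subgraphs_iff
    (n : ℕ) (hn : 0 < n) :
    (∃ G : SimpleGraph (Fin n), G.Connected ∧ metricSubgraphsAreCycles G) ↔ 15 ≤ n := by
  constructor
  · rintro ⟨G, hc, h⟩
    exact lower_bound G hc h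
  · intro h15
    have hb : 4 ≤ n - 11 := by omega
    have hkey : n = 3 + ((n - 11) + 8) := by omega
    let e : Fin n ≃ MV (n - 11) :=
      (finCongr hkey).trans (finSumFinEquiv.symm.trans
        ((Equiv.refl (Fin 3)).sumCongr finSumFinEquiv.symm))
    refine ⟨(mg (n - 11)).comap e.toEmbedding, ?_, ?_⟩
    · exact iso_connected (SimpleGraph.Iso.comap e (mg (n - 11))).symm (mg_connected hb)
    · exact iso_metricSubgraphs (SimpleGraph.Iso.comap e (mg (n - 11))).symm (mg_msc hb)
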